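/- Let f : Finset(V) × X → ℝ be a reward function that is nonnegative, adaptive monotone, and ζ-weakly adaptive submodular for some constant ζ ≥ 1. Let π_g be a greedy policy run for ℓ ≥ 1 steps, and let π* be any policy run for k ≥ 1 steps. If f_avg(π*, k) > 0, then f_avg(π_g, ℓ) > (1 − e^{−ℓ/(ζk)}) · f_avg(π*, k). -/

import Mathlib

attribute [local instance] Classical.propDecidable

set_option linter.unusedSectionVars false
set_option linter.unusedVariables false
set_option linter.deprecated false

noncomputable section

/-- A state `x` is consistent with partial realization `ψ` if every recorded
action–outcome pair agrees with the outcome model `μ`. -/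
def Consistent {X V Y : Type*} (μ : V → X → Y) (x : X) (ψ : Finset (V × Y)) : Prop :=
  ∀ e ∈ ψ, μ e.1 x = e.2

/-- The set of actions occurring in a partial realization. -/
def acts {V Y : Type*} (ψ : Finset (V × Y)) : Finset V := ψ.image Prod.fst

/-- `P[ψ]`: total prior probability of the states consistent with `ψ`. -/
def probP {X V Y : Type*} [Fintype X] (p : X → ℝ) (μ : V → X → Y)
    (ψ : Finset (V × Y)) : ℝ :=
  ∑ x ∈ Finset.univ.filter (fun x => Consistent μ x ψ), p x

/-- Conditional expected marginal benefit `Δ(v|ψ)` of action `v` given `ψ`. -/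
def margBen {X V Y : Type*} [Fintype X] (p : X → ℝ) (μ : V → X → Y)
    (f : Finset V → X → ℝ) (v : V) (ψ : Finset (V × Y)) : ℝ :=
  (probP p μ ψ)⁻¹ *
    ∑ x ∈ Finset.univ.filter (fun x => Consistent μ x ψ),
      p x * (f (insert v (acts ψ)) x - f (acts ψ) x)

/-- Adaptive monotonicity: every conditional expected marginal benefit is nonnegative. -/
def AdaptiveMonotone {X V Y : Type*} [Fintype X] (p : X → ℝ) (μ : V → X → Y)
    (f : Finset V → X → ℝ) : Prop :=
  ∀ (v : V) (ψ : Finset (V × Y)), 0 < probP p μ ψ → 0 ≤ margBen p μ f v ψ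

/-- `ζ`-weak adaptive submodularity. -/
def WeakAdaptiveSubmodular {X V Y : Type*} [Fintype X] (p : X → ℝ) (μ : V → X → Y)
    (f : Finset V → X → ℝ) (ζ : ℝ) : Prop :=
  ∀ ψ ψ' : Finset (V × Y), ψ ⊆ ψ' → 0 < probP p μ ψ' →
    ∀ v ∉ acts ψ', margBen p μ f v ψ' ≤ ζ * margBen p μ f v ψ

/-- History of action–outcome pairs generated by running policy `π` for `t`
steps under true state `x`. -/
def hist {X V Y : Type*} (μ : V → X → Y) (π : List (V × Y) → V) (x : X) :
    ℕ → List (V × Y)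
  | 0 => []
  | t + 1 =>
      hist μ π x t ++ [(π (hist μ π x t), μ (π (hist μ π x t)) x)]

/-- The set of actions appearing in a history. -/
def actsOf {V Y : Type*} (h : List (V × Y)) : Finset V := (h.map Prod.fst).toFinset

/-- Average reward `f_avg(π, t)` of policy `π` at horizon `t`. -/
def favg {X V Y : Type*} [Fintype X] (p : X → ℝ) (μ : V → X → Y)
    (f : Finset V → X → ℝ) (π : List (V × Y) → V) (t : ℕ) : ℝ :=
  ∑ x, p x * f (actsOf (hist μ π x t)) x

/-- A greedy policy: at every history reachable under some state of positive
prior probability, the chosen action maximizes the conditional expected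
marginal benefit. -/
def IsGreedy {X V Y : Type*} [Fintype X] (p : X → ℝ) (μ : V → X → Y)
    (f : Finset V → X → ℝ) (π : List (V × Y) → V) : Prop :=
  ∀ x : X, 0 < p x → ∀ t : ℕ, ∀ v : V,
    margBen p μ f v (hist μ π x t).toFinset ≤
      margBen p μ f (π (hist μ π x t)) (hist μ π x t).toFinset

section Aux

variable {X V Y : Type*} [Fintype X] {p : X → ℝ} {μ : V → X → Y} {f : Finset V → X → ℝ}

lemma acts_toFinset (h : List (V × Y)) : acts h.toFinset = actsOf h := by
  ext v
  simp [acts, actsOf, List.mem_map, Finset.mem_image]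

lemma actsOf_append (a b : List (V × Y)) : actsOf (a ++ b) = actsOf a ∪ actsOf b := by
  ext v; simp [actsOf]

lemma consistent_append {x : X} {a b : List (V × Y)} :
    Consistent μ x (a ++ b).toFinset ↔
      Consistent μ x a.toFinset ∧ Consistent μ x b.toFinset := by
  constructor
  · intro hc
    exact ⟨fun e he => hc e (by simp at he ⊢; exact Or.inl he),
           fun e he => hc e (by simp at he ⊢; exact Or.inr he)⟩
  · rintro ⟨h1, h2⟩ e he
    simp only [List.toFinset_append, Finset.mem_union] at he
    rcases he with h | h
    · exact h1 e h
    · exact h2 e h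

lemma hist_self_consistent (π : List (V × Y) → V) (x : X) (t : ℕ) :
    Consistent μ x (hist μ π x t).toFinset := by
  induction t with
  | zero => intro e he; simp [hist] at he
  | succ t ih =>
      intro e he
      simp only [hist, List.toFinset_append, Finset.mem_union] at he
      rcases he with h | h
      · exact ih e h
      · simp at h; subst h; rfl

lemma hist_length (π : List (V × Y) → V) (x : X) (t : ℕ) :
    (hist μ π x t).length = t := by
  induction t with
  | zero => rfl
  | succ t ih => simp [hist, ih]

lemma consistent_hist_iff (π : List (V × Y) → V) (x x' : X) (t : ℕ) :
    Consistent μ x' (hist μ π x t).toFinset ↔ hist μ π x' t = hist μ π x t := by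
  constructor
  · intro hc
    induction t with
    | zero => rfl
    | succ t ih =>
        have hc' : Consistent μ x' (hist μ π x t).toFinset := by
          intro e he
          exact hc e (by simp only [hist, List.toFinset_append, Finset.mem_union]; exact Or.inl he)
        have heq := ih hc'
        have hlast : μ (π (hist μ π x t)) x' = μ (π (hist μ π x t)) x := by
          have := hc (π (hist μ π x t), μ (π (hist μ π x t)) x)
            (by simp [hist, List.toFinset_append])
          simpa using this
        simp [hist, heq, hlast]
  · intro heq
    rw [← heq]
    exact hist_self_consistent π x' t

lemma probP_nonneg (hp : ∀ x, 0 ≤ p x) (ψ : Finset (V × Y)) : 0 ≤ probP p μ ψ :=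
  Finset.sum_nonneg fun x _ => hp x

lemma margBen_zero_of_probP_zero {v : V} {ψ : Finset (V × Y)} (h : probP p μ ψ = 0) :
    margBen p μ f v ψ = 0 := by
  simp [margBen, h]

lemma margBen_zero_of_mem {v : V} {ψ : Finset (V × Y)} (h : v ∈ acts ψ) :
    margBen p μ f v ψ = 0 := by
  simp [margBen, Finset.insert_eq_self.2 h]

lemma probP_mul_margBen_nonneg (hp : ∀ x, 0 ≤ p x)
    (hmono : ∀ (v : V) (ψ : Finset (V × Y)), 0 < probP p μ ψ → 0 ≤ margBen p μ f v ψ)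
    (v : V) (ψ : Finset (V × Y)) : 0 ≤ probP p μ ψ * margBen p μ f v ψ := by
  rcases lt_or_eq_of_le (probP_nonneg hp ψ) with h | h
  · exact mul_nonneg h.le (hmono v ψ h)
  · rw [← h]; simp

/-- Probability of a class as a fiber sum. -/
lemma probP_eq_fiber_sum (H : X → List (V × Y))
    (hH : ∀ x x', Consistent μ x' (H x).toFinset ↔ H x' = H x) (x₀ : X) :
    probP p μ (H x₀).toFinset = ∑ x ∈ Finset.univ.filter (fun x => H x = H x₀), p x := by
  unfold probP
  apply Finset.sum_congr _ (fun _ _ => rfl)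
  ext x
  simp [hH x₀ x]

/-- Key identity: a fiber sum of marginal gains equals `P[ψ] * Δ(v|ψ)`. -/
lemma fiber_sum_eq (hp : ∀ x, 0 ≤ p x) (H : X → List (V × Y))
    (hH : ∀ x x', Consistent μ x' (H x).toFinset ↔ H x' = H x) (x₀ : X) (v : V) :
    ∑ x ∈ Finset.univ.filter (fun x => H x = H x₀),
        p x * (f (insert v (actsOf (H x₀))) x - f (actsOf (H x₀)) x)
      = probP p μ (H x₀).toFinset * margBen p μ f v (H x₀).toFinset := by
  have hfilter : Finset.univ.filter (fun x => Consistent μ x (H x₀).toFinset)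
      = Finset.univ.filter (fun x => H x = H x₀) := by
    ext x; simp [hH x₀ x]
  have hacts : acts (H x₀).toFinset = actsOf (H x₀) := acts_toFinset _
  rcases eq_or_lt_of_le (probP_nonneg hp ((H x₀).toFinset)) with h0 | h0
  · have hz : ∀ x ∈ Finset.univ.filter (fun x => H x = H x₀), p x = 0 := by
      have := (Finset.sum_eq_zero_iff_of_nonneg
        (fun x _ => hp x)).1 (by rw [probP_eq_fiber_sum H hH x₀] at h0; exact h0.symm)
      exact this
    rw [Finset.sum_congr rfl (fun x hx => by rw [hz x hx, zero_mul])]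
    simp [← h0]
  · unfold margBen
    rw [hfilter, hacts]
    field_simp

end Aux

section Core

variable {X V Y : Type*} [Fintype X] {p : X → ℝ} {μ : V → X → Y} {f : Finset V → X → ℝ}

/-- Lemma A: expected marginal gain of a class-measurable action is nonnegative. -/
lemma lemA (hp : ∀ x, 0 ≤ p x)
    (hmono : ∀ (v : V) (ψ : Finset (V × Y)), 0 < probP p μ ψ → 0 ≤ margBen p μ f v ψ)
    (H : X → List (V × Y))
    (hH : ∀ x x', Consistent μ x' (H x).toFinset ↔ H x' = H x)
    (a : X → V) (ha : ∀ x x', H x' = H x → a x' = a x) :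
    0 ≤ ∑ x, p x * (f (insert (a x) (actsOf (H x))) x - f (actsOf (H x)) x) := by
  rw [← Finset.sum_fiberwise_of_maps_to
    (g := H) (t := Finset.univ.image H)
    (fun x _ => Finset.mem_image_of_mem H (Finset.mem_univ x))]
  apply Finset.sum_nonneg
  intro h hh
  obtain ⟨x₀, -, hx₀⟩ := Finset.mem_image.1 hh
  subst hx₀
  have hcongr : ∀ x ∈ Finset.univ.filter (fun x => H x = H x₀),
      p x * (f (insert (a x) (actsOf (H x))) x - f (actsOf (H x)) x)
        = p x * (f (insert (a x₀) (actsOf (H x₀))) x - f (actsOf (H x₀)) x) := by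
    intro x hx
    have hx' : H x = H x₀ := (Finset.mem_filter.1 hx).2
    rw [ha x₀ x hx', hx']
  rw [Finset.sum_congr rfl hcongr, fiber_sum_eq hp H hH x₀ (a x₀)]
  exact probP_mul_margBen_nonneg hp hmono _ _

/-- Lemma B, per outer class. -/
lemma lemB_class (hp : ∀ x, 0 ≤ p x)
    (hmono : ∀ (v : V) (ψ : Finset (V × Y)), 0 < probP p μ ψ → 0 ≤ margBen p μ f v ψ)
    {ζ : ℝ} (hζ : 1 ≤ ζ)
    (hsubm : ∀ ψ ψ' : Finset (V × Y), ψ ⊆ ψ' → 0 < probP p μ ψ' →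
      ∀ v ∉ acts ψ', margBen p μ f v ψ' ≤ ζ * margBen p μ f v ψ)
    (H H₀ : X → List (V × Y))
    (hH : ∀ x x', Consistent μ x' (H x).toFinset ↔ H x' = H x)
    (hH₀ : ∀ x x', Consistent μ x' (H₀ x).toFinset ↔ H₀ x' = H₀ x)
    (hsub₀ : ∀ x, (H₀ x).toFinset ⊆ (H x).toFinset)
    (hdet : ∀ x x', H x' = H x → H₀ x' = H₀ x)
    (a : X → V) (ha : ∀ x x', H x' = H x → a x' = a x)
    (b : X → V) (hb : ∀ x x', H₀ x' = H₀ x → b x' = b x)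
    (hbg : ∀ x, 0 < p x → ∀ v,
      margBen p μ f v (H₀ x).toFinset ≤ margBen p μ f (b x) (H₀ x).toFinset)
    (x₀ : X) :
    ∑ x ∈ Finset.univ.filter (fun x => H₀ x = H₀ x₀),
        p x * (f (insert (a x) (actsOf (H x))) x - f (actsOf (H x)) x)
      ≤ ζ * (probP p μ (H₀ x₀).toFinset * margBen p μ f (b x₀) (H₀ x₀).toFinset) := by
  set C₀ := Finset.univ.filter (fun x => H₀ x = H₀ x₀) with hC₀
  -- inner fibers are global fibers
  have hfib : ∀ h ∈ C₀.image H,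
      C₀.filter (fun x => H x = h) = Finset.univ.filter (fun x => H x = h) := by
    intro h hh
    obtain ⟨x₁, hx₁mem, hx₁⟩ := Finset.mem_image.1 hh
    have hx₁0 : H₀ x₁ = H₀ x₀ := (Finset.mem_filter.1 hx₁mem).2
    ext x
    simp only [hC₀, Finset.mem_filter, Finset.mem_univ, true_and]
    constructor
    · rintro ⟨-, h2⟩; exact h2
    · intro h2
      refine ⟨?_, h2⟩
      subst hx₁
      exact (hdet x₁ x h2).trans hx₁0
  -- group LHS by H
  rw [← Finset.sum_fiberwise_of_maps_to
    (g := H) (t := C₀.image H) (fun x hx => Finset.mem_image_of_mem H hx)]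
  -- bound the sum by ∑ probP * (ζ * Δ(b₀|ψ₀))
  have key : ∀ h ∈ C₀.image H,
      ∑ x ∈ C₀.filter (fun x => H x = h),
          p x * (f (insert (a x) (actsOf (H x))) x - f (actsOf (H x)) x)
        ≤ probP p μ h.toFinset *
            (ζ * margBen p μ f (b x₀) (H₀ x₀).toFinset) := by
    intro h hh
    obtain ⟨x₁, hx₁mem, hx₁⟩ := Finset.mem_image.1 hh
    have hx₁0 : H₀ x₁ = H₀ x₀ := (Finset.mem_filter.1 hx₁mem).2
    rw [hfib h hh]
    subst hx₁
    have hcongr : ∀ x ∈ Finset.univ.filter (fun x => H x = H x₁),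
        p x * (f (insert (a x) (actsOf (H x))) x - f (actsOf (H x)) x)
          = p x * (f (insert (a x₁) (actsOf (H x₁))) x - f (actsOf (H x₁)) x) := by
      intro x hx
      have hx' : H x = H x₁ := (Finset.mem_filter.1 hx).2
      rw [ha x₁ x hx', hx']
    rw [Finset.sum_congr rfl hcongr, fiber_sum_eq hp H hH x₁ (a x₁)]
    rcases eq_or_lt_of_le (probP_nonneg hp ((H x₁).toFinset)) with h0 | h0
    · rw [← h0]; simp
    · -- P_h > 0
      have hPsub : probP p μ (H x₁).toFinset ≤ probP p μ (H₀ x₀).toFinset := by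
        unfold probP
        apply Finset.sum_le_sum_of_subset_of_nonneg _ (fun x _ _ => hp x)
        intro x hx
        simp only [Finset.mem_filter, Finset.mem_univ, true_and] at hx ⊢
        have : H x = H x₁ := (hH x₁ x).1 hx
        rw [← hx₁0]
        rw [← hdet x₁ x this]
        exact (hH₀ x x).2 rfl
      have hP₀ : 0 < probP p μ (H₀ x₀).toFinset := lt_of_lt_of_le h0 hPsub
      -- positive-probability representative of the outer class
      obtain ⟨xp, hxpmem, hxp⟩ : ∃ xp ∈ Finset.univ.filter (fun x => H₀ x = H₀ x₀), p xp ≠ 0 := by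
        apply Finset.exists_ne_zero_of_sum_ne_zero
        rw [← probP_eq_fiber_sum H₀ hH₀ x₀]
        exact ne_of_gt hP₀
      have hxp0 : H₀ xp = H₀ x₀ := (Finset.mem_filter.1 hxpmem).2
      have hxppos : 0 < p xp := lt_of_le_of_ne (hp xp) (Ne.symm hxp)
      have hbg' : ∀ v, margBen p μ f v (H₀ x₀).toFinset
          ≤ margBen p μ f (b x₀) (H₀ x₀).toFinset := by
        intro v
        have := hbg xp hxppos v
        rwa [hxp0, hb x₀ xp hxp0] at this
      have hΔ0 : 0 ≤ margBen p μ f (b x₀) (H₀ x₀).toFinset := hmono _ _ hP₀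
      have hstep : margBen p μ f (a x₁) (H x₁).toFinset
          ≤ ζ * margBen p μ f (b x₀) (H₀ x₀).toFinset := by
        by_cases hmem : a x₁ ∈ acts (H x₁).toFinset
        · rw [margBen_zero_of_mem hmem]
          exact mul_nonneg (le_trans zero_le_one hζ) hΔ0
        · have h1 : margBen p μ f (a x₁) (H x₁).toFinset
              ≤ ζ * margBen p μ f (a x₁) (H₀ x₀).toFinset := by
            apply hsubm _ _ _ h0 _ hmem
            rw [← hx₁0]; exact hsub₀ x₁
          exact h1.trans (by
            apply mul_le_mul_of_nonneg_left (hbg' (a x₁))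
              (le_trans zero_le_one hζ))
      exact mul_le_mul_of_nonneg_left hstep h0.le
  calc ∑ h ∈ C₀.image H, ∑ x ∈ C₀.filter (fun x => H x = h),
          p x * (f (insert (a x) (actsOf (H x))) x - f (actsOf (H x)) x)
      ≤ ∑ h ∈ C₀.image H, probP p μ h.toFinset *
            (ζ * margBen p μ f (b x₀) (H₀ x₀).toFinset) :=
        Finset.sum_le_sum key
    _ = (∑ h ∈ C₀.image H, probP p μ h.toFinset) *
            (ζ * margBen p μ f (b x₀) (H₀ x₀).toFinset) := by
        rw [Finset.sum_mul]
    _ = probP p μ (H₀ x₀).toFinset * (ζ * margBen p μ f (b x₀) (H₀ x₀).toFinset) := by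
        congr 1
        have : ∀ h ∈ C₀.image H, probP p μ h.toFinset
            = ∑ x ∈ C₀.filter (fun x => H x = h), p x := by
          intro h hh
          obtain ⟨x₁, hx₁mem, hx₁⟩ := Finset.mem_image.1 hh
          rw [hfib h hh]
          subst hx₁
          exact probP_eq_fiber_sum H hH x₁
        rw [Finset.sum_congr rfl this,
          Finset.sum_fiberwise_of_maps_to (fun x hx => Finset.mem_image_of_mem H hx),
          probP_eq_fiber_sum H₀ hH₀ x₀]
    _ = ζ * (probP p μ (H₀ x₀).toFinset * margBen p μ f (b x₀) (H₀ x₀).toFinset) := by ring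

/-- Lemma B: comparison of expected marginal gains across refinements. -/
lemma lemB (hp : ∀ x, 0 ≤ p x)
    (hmono : ∀ (v : V) (ψ : Finset (V × Y)), 0 < probP p μ ψ → 0 ≤ margBen p μ f v ψ)
    {ζ : ℝ} (hζ : 1 ≤ ζ)
    (hsubm : ∀ ψ ψ' : Finset (V × Y), ψ ⊆ ψ' → 0 < probP p μ ψ' →
      ∀ v ∉ acts ψ', margBen p μ f v ψ' ≤ ζ * margBen p μ f v ψ)
    (H H₀ : X → List (V × Y))
    (hH : ∀ x x', Consistent μ x' (H x).toFinset ↔ H x' = H x)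
    (hH₀ : ∀ x x', Consistent μ x' (H₀ x).toFinset ↔ H₀ x' = H₀ x)
    (hsub₀ : ∀ x, (H₀ x).toFinset ⊆ (H x).toFinset)
    (hdet : ∀ x x', H x' = H x → H₀ x' = H₀ x)
    (a : X → V) (ha : ∀ x x', H x' = H x → a x' = a x)
    (b : X → V) (hb : ∀ x x', H₀ x' = H₀ x → b x' = b x)
    (hbg : ∀ x, 0 < p x → ∀ v,
      margBen p μ f v (H₀ x).toFinset ≤ margBen p μ f (b x) (H₀ x).toFinset) :
    ∑ x, p x * (f (insert (a x) (actsOf (H x))) x - f (actsOf (H x)) x)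
      ≤ ζ * ∑ x, p x * (f (insert (b x) (actsOf (H₀ x))) x - f (actsOf (H₀ x)) x) := by
  rw [← Finset.sum_fiberwise_of_maps_to
      (g := H₀) (t := Finset.univ.image H₀)
      (fun x _ => Finset.mem_image_of_mem H₀ (Finset.mem_univ x))
      (fun x => p x * (f (insert (a x) (actsOf (H x))) x - f (actsOf (H x)) x)),
    ← Finset.sum_fiberwise_of_maps_to
      (g := H₀) (t := Finset.univ.image H₀)
      (fun x _ => Finset.mem_image_of_mem H₀ (Finset.mem_univ x))
      (fun x => p x * (f (insert (b x) (actsOf (H₀ x))) x - f (actsOf (H₀ x)) x)),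
    Finset.mul_sum]
  apply Finset.sum_le_sum
  intro h hh
  obtain ⟨x₀, -, hx₀⟩ := Finset.mem_image.1 hh
  subst hx₀
  have hcongr : ∀ x ∈ Finset.univ.filter (fun x => H₀ x = H₀ x₀),
      p x * (f (insert (b x) (actsOf (H₀ x))) x - f (actsOf (H₀ x)) x)
        = p x * (f (insert (b x₀) (actsOf (H₀ x₀))) x - f (actsOf (H₀ x₀)) x) := by
    intro x hx
    have hx' : H₀ x = H₀ x₀ := (Finset.mem_filter.1 hx).2
    rw [hb x₀ x hx', hx']
  rw [Finset.sum_congr rfl hcongr, fiber_sum_eq hp H₀ hH₀ x₀ (b x₀)]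
  exact lemB_class hp hmono hζ hsubm H H₀ hH hH₀ hsub₀ hdet a ha b hb hbg x₀

end Core

section Main

variable {X V Y : Type*} [Fintype X] {p : X → ℝ} {μ : V → X → Y} {f : Finset V → X → ℝ}

lemma actsOf_hist_succ (π : List (V × Y) → V) (x : X) (t : ℕ) :
    actsOf (hist μ π x (t + 1))
      = insert (π (hist μ π x t)) (actsOf (hist μ π x t)) := by
  show actsOf (hist μ π x t ++ [_]) = _
  rw [actsOf_append]
  ext w
  simp [actsOf, or_comm]

lemma hist_append_det {π₁ π₂ : List (V × Y) → V} {i j : ℕ} {x x' : X}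
    (h : hist μ π₁ x' i ++ hist μ π₂ x' j = hist μ π₁ x i ++ hist μ π₂ x j) :
    hist μ π₁ x' i = hist μ π₁ x i ∧ hist μ π₂ x' j = hist μ π₂ x j :=
  List.append_inj h (by rw [hist_length, hist_length])

lemma consistent_hist_append_iff (π₁ π₂ : List (V × Y) → V) (i j : ℕ) (x x' : X) :
    Consistent μ x' ((hist μ π₁ x i ++ hist μ π₂ x j).toFinset) ↔
      hist μ π₁ x' i ++ hist μ π₂ x' j = hist μ π₁ x i ++ hist μ π₂ x j := by
  rw [consistent_append, consistent_hist_iff, consistent_hist_iff]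
  constructor
  · rintro ⟨h1, h2⟩; rw [h1, h2]
  · intro h
    obtain ⟨h1, h2⟩ := hist_append_det h
    exact ⟨h1, h2⟩

/-- One-step comparison: the optimum is within `ζ k` marginal steps of greedy. -/
lemma key_step (hp : ∀ x, 0 ≤ p x)
    (hmono : AdaptiveMonotone p μ f)
    {ζ : ℝ} (hζ : 1 ≤ ζ)
    (hsubm : WeakAdaptiveSubmodular p μ f ζ)
    (πg πs : List (V × Y) → V) (hg : IsGreedy p μ f πg)
    (k : ℕ) (t : ℕ) :
    favg p μ f πs k ≤ favg p μ f πg t +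
      (ζ * (k : ℝ)) * (favg p μ f πg (t + 1) - favg p μ f πg t) := by
  set Dsum : ℝ := ∑ x, p x * (f (insert (πg (hist μ πg x t)) (actsOf (hist μ πg x t))) x
      - f (actsOf (hist μ πg x t)) x) with hDsum
  have hDg : favg p μ f πg (t + 1) - favg p μ f πg t = Dsum := by
    unfold favg
    rw [hDsum, ← Finset.sum_sub_distrib]
    apply Finset.sum_congr rfl
    intro x _
    rw [actsOf_hist_succ]
    ring
  -- Part 3: inserting the greedy prefix does not decrease average reward
  have part3 : ∀ i : ℕ,
      ∑ x, p x * f (actsOf (hist μ πs x k)) x ≤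
        ∑ x, p x * f (actsOf (hist μ πg x i) ∪ actsOf (hist μ πs x k)) x := by
    intro i
    induction i with
    | zero =>
        apply le_of_eq
        apply Finset.sum_congr rfl
        intro x _
        have h0 : actsOf (hist μ πg x 0) = (∅ : Finset V) := by simp [hist, actsOf]
        rw [h0, Finset.empty_union]
    | succ i ih =>
        refine ih.trans ?_
        have h0 := lemA hp hmono (fun x => hist μ πg x i ++ hist μ πs x k)
          (fun x x' => consistent_hist_append_iff πg πs i k x x')
          (fun x => πg (hist μ πg x i))
          (fun x x' h => congrArg πg (hist_append_det h).1)
        simp only [mul_sub] at h0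
        rw [Finset.sum_sub_distrib] at h0
        have e1 : ∑ x, p x * f (actsOf (hist μ πg x (i+1)) ∪ actsOf (hist μ πs x k)) x
            = ∑ x, p x * f (insert (πg (hist μ πg x i))
                (actsOf (hist μ πg x i ++ hist μ πs x k))) x := by
          apply Finset.sum_congr rfl
          intro x _
          rw [actsOf_hist_succ, actsOf_append, Finset.insert_union]
        have e2 : ∑ x, p x * f (actsOf (hist μ πg x i) ∪ actsOf (hist μ πs x k)) x
            = ∑ x, p x * f (actsOf (hist μ πg x i ++ hist μ πs x k)) x := by
          apply Finset.sum_congr rfl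
          intro x _
          rw [actsOf_append]
        rw [e1, e2]
        linarith
  -- Part 2: each opponent step gains at most ζ · Dsum
  have part2 : ∀ j : ℕ,
      ∑ x, p x * f (actsOf (hist μ πg x t) ∪ actsOf (hist μ πs x (j+1))) x ≤
        ∑ x, p x * f (actsOf (hist μ πg x t) ∪ actsOf (hist μ πs x j)) x + ζ * Dsum := by
    intro j
    have hB := lemB hp hmono hζ hsubm
      (fun x => hist μ πg x t ++ hist μ πs x j)
      (fun x => hist μ πg x t)
      (fun x x' => consistent_hist_append_iff πg πs t j x x')
      (fun x x' => consistent_hist_iff πg x x' t)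
      (fun x => by rw [List.toFinset_append]; exact Finset.subset_union_left)
      (fun x x' h => (hist_append_det h).1)
      (fun x => πs (hist μ πs x j))
      (fun x x' h => congrArg πs (hist_append_det h).2)
      (fun x => πg (hist μ πg x t))
      (fun x x' h => congrArg πg h)
      (fun x hx v => hg x hx t v)
    simp only [mul_sub] at hB
    rw [Finset.sum_sub_distrib, Finset.sum_sub_distrib] at hB
    have e1 : ∑ x, p x * f (actsOf (hist μ πg x t) ∪ actsOf (hist μ πs x (j+1))) x
        = ∑ x, p x * f (insert (πs (hist μ πs x j))
            (actsOf (hist μ πg x t ++ hist μ πs x j))) x := by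
      apply Finset.sum_congr rfl
      intro x _
      rw [actsOf_hist_succ, actsOf_append, Finset.union_insert]
    have e2 : ∑ x, p x * f (actsOf (hist μ πg x t) ∪ actsOf (hist μ πs x j)) x
        = ∑ x, p x * f (actsOf (hist μ πg x t ++ hist μ πs x j)) x := by
      apply Finset.sum_congr rfl
      intro x _
      rw [actsOf_append]
    rw [e1, e2]
    have hD : Dsum = ∑ x, p x * f (insert (πg (hist μ πg x t)) (actsOf (hist μ πg x t))) x
        - ∑ x, p x * f (actsOf (hist μ πg x t)) x := by
      rw [hDsum]
      simp only [mul_sub]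
      rw [Finset.sum_sub_distrib]
    rw [hD]
    linarith [hB]
  -- iterate part2
  have part2' : ∀ j : ℕ,
      ∑ x, p x * f (actsOf (hist μ πg x t) ∪ actsOf (hist μ πs x j)) x ≤
        favg p μ f πg t + (j : ℝ) * (ζ * Dsum) := by
    intro j
    induction j with
    | zero =>
        apply le_of_eq
        push_cast
        rw [zero_mul, add_zero]
        unfold favg
        apply Finset.sum_congr rfl
        intro x _
        have h0 : actsOf (hist μ πs x 0) = (∅ : Finset V) := by simp [hist, actsOf]
        rw [h0, Finset.union_empty]
    | succ j ih =>
        have := part2 j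
        push_cast
        linarith
  have hfin : favg p μ f πs k ≤ favg p μ f πg t + (k : ℝ) * (ζ * Dsum) := by
    have h1 : favg p μ f πs k = ∑ x, p x * f (actsOf (hist μ πs x k)) x := rfl
    rw [h1]
    exact (part3 t).trans (part2' k)
  rw [hDg]
  linarith [hfin]

end Main

/-- performance guarantee for a greedy policy run for `ℓ` steps
against any policy run for `k` steps, for a nonnegative, adaptive monotone and
`ζ`-weakly adaptive submodular reward function. -/
theorem greedy_near_optimal {X V Y : Type*}
    [Fintype X] [Nonempty X] [Fintype V] [Nonempty V] [Fintype Y] [Nonempty Y]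
    (p : X → ℝ) (hp : ∀ x, 0 ≤ p x) (hpsum : ∑ x, p x = 1)
    (μ : V → X → Y) (f : Finset V → X → ℝ)
    (hf : ∀ (A : Finset V) (x : X), 0 ≤ f A x)
    (hmono : AdaptiveMonotone p μ f)
    (ζ : ℝ) (hζ : 1 ≤ ζ)
    (hsub : WeakAdaptiveSubmodular p μ f ζ)
    (πg πs : List (V × Y) → V) (hg : IsGreedy p μ f πg)
    (ℓ k : ℕ) (hℓ : 1 ≤ ℓ) (hk : 1 ≤ k)
    (hpos : 0 < favg p μ f πs k) :
    (1 - Real.exp (-(ℓ : ℝ) / (ζ * (k : ℝ)))) * favg p μ f πs k <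
      favg p μ f πg ℓ := by
  set OPT : ℝ := favg p μ f πs k with hOPT
  set g : ℕ → ℝ := favg p μ f πg with hgdef
  set A : ℝ := ζ * (k : ℝ) with hA
  have hk1 : (1 : ℝ) ≤ (k : ℝ) := by exact_mod_cast hk
  have hA1 : 1 ≤ A := by nlinarith
  have hA0 : 0 < A := lt_of_lt_of_le one_pos hA1
  set r : ℝ := 1 - A⁻¹ with hr
  have hinv : A * A⁻¹ = 1 := mul_inv_cancel₀ (ne_of_gt hA0)
  have hinvpos : 0 < A⁻¹ := inv_pos.2 hA0
  have hr0 : 0 ≤ r := by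
    rw [hr]
    nlinarith [mul_nonneg (sub_nonneg.2 hA1) hinvpos.le, hinv]
  have key : ∀ t, OPT ≤ g t + A * (g (t + 1) - g t) :=
    fun t => key_step hp hmono hζ hsub πg πs hg k t
  have hrec : ∀ t, OPT - g (t + 1) ≤ r * (OPT - g t) := by
    intro t
    rw [← mul_le_mul_iff_right₀ hA0]
    have e : A * (r * (OPT - g t)) = (A - 1) * (OPT - g t) := by
      have h1 : A * (1 - A⁻¹) = A - 1 := by rw [mul_sub, hinv, mul_one]
      rw [hr, ← mul_assoc, h1]
    rw [e]
    nlinarith [key t]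
  have g0 : 0 ≤ g 0 := Finset.sum_nonneg fun x _ => mul_nonneg (hp x) (hf _ _)
  have bound : ∀ t, OPT - g t ≤ r ^ t * OPT := by
    intro t
    induction t with
    | zero => simpa using (by linarith : OPT - g 0 ≤ OPT)
    | succ t ih =>
        calc OPT - g (t + 1) ≤ r * (OPT - g t) := hrec t
          _ ≤ r * (r ^ t * OPT) := mul_le_mul_of_nonneg_left ih hr0
          _ = r ^ (t + 1) * OPT := by ring
  have hrlt : r < Real.exp (-A⁻¹) := by
    have := Real.add_one_lt_exp (x := -A⁻¹) (by intro h; rw [neg_eq_zero] at h; exact (ne_of_gt hinvpos) h)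
    linarith
  have hpow : r ^ ℓ < Real.exp (-(ℓ : ℝ) / A) := by
    have h1 : r ^ ℓ < (Real.exp (-A⁻¹)) ^ ℓ :=
      pow_lt_pow_left₀ hrlt hr0 (by omega)
    have h2 : (Real.exp (-A⁻¹)) ^ ℓ = Real.exp (-(ℓ : ℝ) / A) := by
      rw [← Real.exp_nat_mul]
      congr 1
      rw [div_eq_mul_inv]; ring
    linarith [h2 ▸ h1]
  have final : OPT - g ℓ < Real.exp (-(ℓ : ℝ) / A) * OPT :=
    lt_of_le_of_lt (bound ℓ) (mul_lt_mul_of_pos_right hpow hpos)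
  have expand : (1 - Real.exp (-(ℓ : ℝ) / (ζ * (k : ℝ)))) * OPT
      = OPT - Real.exp (-(ℓ : ℝ) / A) * OPT := by
    rw [hA]; ring
  rw [expand]
  linarith [final]
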